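/- arXiv:1910.03407 — 2 statements merged into one kernel-verified Lean document; each statement's English description precedes it below -/
import Mathlib

section
/- For all real κ, all 0 < ε ≤ R, and all A ≥ 0, the bound |κ ∫_ε^R e^{±iAρ} ρ^{-1+iκ} dρ| ≤ C(1+|κ|)² holds with a constant C independent of κ, ε, R and A. -/
open MeasureTheory Complex intervalIntegral

namespace WOE

lemma norm_cpow_I' {x : ℝ} (hx : 0 < x) (κ : ℝ) :
    ‖(x : ℂ) ^ (Complex.I * (κ : ℂ))‖ = 1 := by
  rw [Complex.norm_cpow_eq_rpow_re_of_pos hx]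
  simp

lemma norm_cpow_c {x : ℝ} (hx : 0 < x) (κ : ℝ) :
    ‖(x : ℂ) ^ ((-1 : ℂ) + Complex.I * (κ : ℂ))‖ = x⁻¹ := by
  rw [Complex.norm_cpow_eq_rpow_re_of_pos hx]
  simp [Real.rpow_neg_one]

lemma norm_cpow_d {x : ℝ} (hx : 0 < x) (κ : ℝ) :
    ‖(x : ℂ) ^ ((-2 : ℂ) + Complex.I * (κ : ℂ))‖ = x ^ (-2 : ℝ) := by
  rw [Complex.norm_cpow_eq_rpow_re_of_pos hx]
  norm_num

lemma norm_expI (t : ℝ) : ‖Complex.exp (Complex.I * (t : ℂ))‖ = 1 := by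
  rw [Complex.norm_exp]
  simp

lemma contOn_cpow (y : ℂ) {a b : ℝ} (ha : 0 < a) (hab : a ≤ b) :
    ContinuousOn (fun ρ : ℝ => (ρ : ℂ) ^ y) (Set.uIcc a b) := by
  intro x hx
  rw [Set.uIcc_of_le hab] at hx
  have hx0 : x ≠ 0 := (lt_of_lt_of_le ha hx.1).ne'
  exact (continuousAt_ofReal_cpow_const x y (Or.inr hx0)).continuousWithinAt

lemma contOn_f (κ A s : ℝ) {a b : ℝ} (ha : 0 < a) (hab : a ≤ b) :
    ContinuousOn (fun ρ : ℝ => Complex.exp (Complex.I * Complex.ofReal (s * A * ρ)) *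
      (ρ : ℂ) ^ ((-1 : ℂ) + Complex.I * (κ : ℂ))) (Set.uIcc a b) := by
  apply ContinuousOn.mul
  · exact (Continuous.cexp (by continuity)).continuousOn
  · exact contOn_cpow _ ha hab

lemma hasDerivAt_cpow_c {x : ℝ} (hx : x ≠ 0) (κ : ℝ) :
    HasDerivAt (fun y : ℝ => (y : ℂ) ^ ((-1 : ℂ) + Complex.I * (κ : ℂ)))
      (((-1 : ℂ) + Complex.I * κ) * (x : ℂ) ^ ((-2 : ℂ) + Complex.I * (κ : ℂ))) x := by
  have hd : ((-2 : ℂ) + Complex.I * κ) ≠ -1 := by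
    intro h
    have := congrArg Complex.re h
    simp at this
  have hne : ((-1 : ℂ) + Complex.I * (κ : ℂ)) ≠ 0 := by
    intro h
    have := congrArg Complex.re h
    simp at this
  have h := (hasDerivAt_ofReal_cpow_const' hx hd).const_mul ((-1 : ℂ) + Complex.I * (κ : ℂ))
  have hx1 : ((-2 : ℂ) + Complex.I * (κ : ℂ)) + 1 = (-1 : ℂ) + Complex.I * (κ : ℂ) := by ring
  rw [hx1] at h
  have hfun : (fun y : ℝ => ((-1 : ℂ) + Complex.I * (κ : ℂ)) *
      ((y : ℂ) ^ ((-1 : ℂ) + Complex.I * (κ : ℂ)) / ((-1 : ℂ) + Complex.I * (κ : ℂ)))) =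
      fun y : ℝ => (y : ℂ) ^ ((-1 : ℂ) + Complex.I * (κ : ℂ)) := by
    funext y
    exact mul_div_cancel₀ _ hne
  rwa [hfun] at h

lemma hasDerivAt_expf (s A x : ℝ) :
    HasDerivAt (fun ρ : ℝ => Complex.exp (Complex.I * Complex.ofReal (s * A * ρ)))
      (Complex.I * s * A * Complex.exp (Complex.I * Complex.ofReal (s * A * x))) x := by
  have h0 : HasDerivAt (fun ρ : ℝ => ((ρ : ℂ))) 1 x := by
    simpa using (hasDerivAt_id x).ofReal_comp
  have h1 := ((h0.const_mul (Complex.I * s * A)).cexp)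
  have hfun : (fun ρ : ℝ => Complex.exp (Complex.I * s * A * (ρ : ℂ))) =
      fun ρ : ℝ => Complex.exp (Complex.I * Complex.ofReal (s * A * ρ)) := by
    funext ρ; push_cast; ring_nf
  rw [hfun] at h1
  convert h1 using 1
  push_cast; ring

lemma integral_cpow_c {a b : ℝ} (ha : 0 < a) (hab : a ≤ b) {κ : ℝ} (hκ : κ ≠ 0) :
    ∫ ρ in a..b, (ρ : ℂ) ^ ((-1 : ℂ) + Complex.I * (κ : ℂ)) =
      ((b : ℂ) ^ (Complex.I * (κ : ℂ)) - (a : ℂ) ^ (Complex.I * (κ : ℂ))) / (Complex.I * κ) := by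
  have h0 : (0 : ℝ) ∉ Set.uIcc a b := by
    rw [Set.uIcc_of_le hab]
    intro h
    exact absurd h.1 (by linarith)
  have hr : ((-1 : ℂ) + Complex.I * (κ : ℂ)) ≠ -1 := by
    intro h
    have := congrArg Complex.im h
    simp [hκ] at this
  have h := integral_cpow (a := a) (b := b) (r := (-1 : ℂ) + Complex.I * κ) (Or.inr ⟨hr, h0⟩)
  rw [show ((-1 : ℂ) + Complex.I * (κ : ℂ)) + 1 = Complex.I * κ by ring] at h
  exact h

lemma norm_kappa_mul_integral_cpow {a b : ℝ} (ha : 0 < a) (hab : a ≤ b) (κ : ℝ) :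
    ‖(κ : ℂ) * ∫ ρ in a..b, (ρ : ℂ) ^ ((-1 : ℂ) + Complex.I * (κ : ℂ))‖ ≤ 2 := by
  rcases eq_or_ne κ 0 with hκ | hκ
  · simp [hκ]
  rw [integral_cpow_c ha hab hκ, norm_mul, norm_div]
  have h1 : ‖(κ : ℂ)‖ = |κ| := by simp
  have h2 : ‖Complex.I * (κ : ℂ)‖ = |κ| := by simp
  have hb : 0 < b := lt_of_lt_of_le ha hab
  have h3 : ‖(b : ℂ) ^ (Complex.I * (κ : ℂ)) - (a : ℂ) ^ (Complex.I * (κ : ℂ))‖ ≤ 2 := by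
    calc ‖(b : ℂ) ^ (Complex.I * (κ : ℂ)) - (a : ℂ) ^ (Complex.I * (κ : ℂ))‖
        ≤ ‖(b : ℂ) ^ (Complex.I * (κ : ℂ))‖ + ‖(a : ℂ) ^ (Complex.I * (κ : ℂ))‖ :=
          norm_sub_le _ _
      _ ≤ 2 := by
          rw [norm_cpow_I' hb, norm_cpow_I' ha]
          norm_num
  rw [h1, h2]
  have hκ' : 0 < |κ| := abs_pos.mpr hκ
  rw [mul_comm, div_mul_cancel₀ _ hκ'.ne']
  exact h3

end WOE

open WOE

/-- For all real `κ`, all `0 < ε ≤ R`, and all `A ≥ 0`, the bound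
`|κ ∫_ε^R e^{±iAρ} ρ^{-1+iκ} dρ| ≤ C (1+|κ|)^2` holds with an absolute constant `C`. -/
theorem weighted_oscillatory_elementary :
    ∃ C : ℝ, 0 < C ∧ ∀ (κ ε R A s : ℝ), 0 < ε → ε ≤ R → 0 ≤ A → (s = 1 ∨ s = -1) →
      ‖(κ : ℂ) * ∫ ρ in ε..R,
          Complex.exp (Complex.I * Complex.ofReal (s * A * ρ)) *
            (ρ : ℂ) ^ ((-1 : ℂ) + Complex.I * (κ : ℂ))‖
        ≤ C * (1 + |κ|) ^ 2 := by
  refine ⟨10, by norm_num, ?_⟩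
  intro κ ε R A s hε hεR hA hs
  have hR : 0 < R := lt_of_lt_of_le hε hεR
  have hsq : (0:ℝ) ≤ |κ| := abs_nonneg κ
  have hs1 : |s| = 1 := by rcases hs with h | h <;> simp [h]
  rcases eq_or_lt_of_le hA with hA0 | hA0
  · -- A = 0
    subst hA0
    simp only [mul_zero, zero_mul, Complex.ofReal_zero, Complex.exp_zero, one_mul]
    refine le_trans (norm_kappa_mul_integral_cpow hε hεR κ) ?_
    nlinarith
  -- A > 0
  rcases eq_or_ne κ 0 with hκ0 | hκ0
  · simp [hκ0]
  set δ : ℝ := max ε (min R (1 / A)) with hδdef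
  have hεδ : ε ≤ δ := le_max_left _ _
  have hδR : δ ≤ R := max_le hεR (min_le_left _ _)
  have hδpos : 0 < δ := lt_of_lt_of_le hε hεδ
  set f : ℝ → ℂ := fun ρ : ℝ => Complex.exp (Complex.I * Complex.ofReal (s * A * ρ)) *
      (ρ : ℂ) ^ ((-1 : ℂ) + Complex.I * (κ : ℂ)) with hfdef
  have hint1 : IntervalIntegrable f volume ε δ := (contOn_f κ A s hε hεδ).intervalIntegrable
  have hint2 : IntervalIntegrable f volume δ R := (contOn_f κ A s hδpos hδR).intervalIntegrable
  have hsplit : (∫ ρ in ε..R, f ρ) = (∫ ρ in ε..δ, f ρ) + ∫ ρ in δ..R, f ρ :=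
    (integral_add_adjacent_intervals hint1 hint2).symm
  -- near part
  have hnear : ‖(κ : ℂ) * ∫ ρ in ε..δ, f ρ‖ ≤ 2 + 2 * |κ| := by
    rcases le_or_gt ε (1 / A) with hc1 | hc1
    · -- ε ≤ 1/A, so δ ≤ 1/A
      have hδA : δ ≤ 1 / A := max_le hc1 (min_le_right _ _)
      have hAδ : δ * A ≤ 1 := (le_div_iff₀ hA0).mp hδA
      have hgint : IntervalIntegrable (fun ρ : ℝ => (ρ : ℂ) ^ ((-1 : ℂ) + Complex.I * (κ : ℂ)))
          volume ε δ := (contOn_cpow _ hε hεδ).intervalIntegrable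
      have hdecomp : (∫ ρ in ε..δ, f ρ) =
          (∫ ρ in ε..δ, (ρ : ℂ) ^ ((-1 : ℂ) + Complex.I * (κ : ℂ))) +
            ∫ ρ in ε..δ, (f ρ - (ρ : ℂ) ^ ((-1 : ℂ) + Complex.I * (κ : ℂ))) := by
        rw [integral_sub hint1 hgint]; ring
      rw [hdecomp, mul_add]
      refine le_trans (norm_add_le _ _) (add_le_add (norm_kappa_mul_integral_cpow hε hεδ κ) ?_)
      rw [norm_mul, Complex.norm_real]
      have hbnd : ‖∫ ρ in ε..δ, (f ρ - (ρ : ℂ) ^ ((-1 : ℂ) + Complex.I * (κ : ℂ)))‖ ≤ 2 := by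
        have hptwise : ∀ x ∈ Set.uIoc ε δ,
            ‖f x - (x : ℂ) ^ ((-1 : ℂ) + Complex.I * (κ : ℂ))‖ ≤ 2 * A := by
          intro x hx
          rw [Set.uIoc_of_le hεδ] at hx
          have hx0 : 0 < x := lt_trans hε hx.1
          have heq : f x - (x : ℂ) ^ ((-1 : ℂ) + Complex.I * (κ : ℂ)) =
              (Complex.exp (Complex.I * Complex.ofReal (s * A * x)) - 1) *
                (x : ℂ) ^ ((-1 : ℂ) + Complex.I * (κ : ℂ)) := by
            simp only [hfdef]; ring
          rw [heq, norm_mul, norm_cpow_c hx0]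
          have habs : ‖Complex.I * Complex.ofReal (s * A * x)‖ = A * x := by
            rw [norm_mul, Complex.norm_I, Complex.norm_real, Real.norm_eq_abs, one_mul, abs_mul, abs_mul, hs1,
              one_mul, _root_.abs_of_pos hA0, _root_.abs_of_pos hx0]
          have hle1 : ‖Complex.I * Complex.ofReal (s * A * x)‖ ≤ 1 := by
            rw [habs]
            nlinarith [hx.2, hx0, hA0]
          have h2 := Complex.norm_exp_sub_one_le hle1
          rw [habs] at h2
          calc ‖Complex.exp (Complex.I * Complex.ofReal (s * A * x)) - 1‖ * x⁻¹
              ≤ (2 * (A * x)) * x⁻¹ := by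
                apply mul_le_mul_of_nonneg_right _ (inv_nonneg.mpr hx0.le)
                exact h2
            _ = 2 * A := by field_simp
        refine le_trans (intervalIntegral.norm_integral_le_of_norm_le_const hptwise) ?_
        have habs2 : |δ - ε| = δ - ε := _root_.abs_of_nonneg (by linarith)
        rw [habs2]
        nlinarith
      calc |κ| * ‖∫ ρ in ε..δ, (f ρ - (ρ : ℂ) ^ ((-1 : ℂ) + Complex.I * (κ : ℂ)))‖
          ≤ |κ| * 2 := mul_le_mul_of_nonneg_left hbnd hsq
        _ = 2 * |κ| := by ring
    · -- 1/A < ε, so δ = ε and the near integral vanishes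
      have hδε : δ = ε := by
        rw [hδdef, max_eq_left (le_trans (min_le_right _ _) hc1.le)]
      rw [hδε]
      simp only [intervalIntegral.integral_same, mul_zero, norm_zero]
      positivity
  -- far part
  have hfar : ‖(κ : ℂ) * ∫ ρ in δ..R, f ρ‖ ≤ |κ| * (3 + |κ|) := by
    rcases eq_or_lt_of_le hδR with hδR' | hδR'
    · rw [hδR']
      simp only [intervalIntegral.integral_same, mul_zero, norm_zero]
      positivity
    · have hge : min R (1 / A) ≤ δ := le_max_right _ _
      have h1A : 1 / A ≤ δ := by
        rcases le_or_gt (1 / A) R with h2 | h2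
        · rwa [min_eq_right h2] at hge
        · rw [min_eq_left h2.le] at hge
          linarith [one_div_pos.mpr hA0]
      have hAδ1 : 1 ≤ A * δ := by
        rw [div_le_iff₀ hA0] at h1A
        linarith
      have hs0 : (s : ℂ) ≠ 0 := by
        rcases hs with h | h <;> simp [h]
      have hA0' : (A : ℂ) ≠ 0 := by exact_mod_cast hA0.ne'
      have hisA : Complex.I * (s : ℂ) * (A : ℂ) ≠ 0 := by
        simp [Complex.I_ne_zero, hs0, hA0']
      set u : ℝ → ℂ := fun ρ : ℝ => (ρ : ℂ) ^ ((-1 : ℂ) + Complex.I * (κ : ℂ)) with hu_def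
      set u' : ℝ → ℂ := fun ρ : ℝ => ((-1 : ℂ) + Complex.I * κ) *
          (ρ : ℂ) ^ ((-2 : ℂ) + Complex.I * (κ : ℂ)) with hu'_def
      set v : ℝ → ℂ := fun ρ : ℝ =>
          Complex.exp (Complex.I * Complex.ofReal (s * A * ρ)) / (Complex.I * s * A) with hv_def
      set v' : ℝ → ℂ := fun ρ : ℝ =>
          Complex.exp (Complex.I * Complex.ofReal (s * A * ρ)) with hv'_def
      have hu : ∀ x ∈ Set.uIcc δ R, HasDerivAt u (u' x) x := by
        intro x hx
        rw [Set.uIcc_of_le hδR] at hx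
        exact hasDerivAt_cpow_c (lt_of_lt_of_le hδpos hx.1).ne' κ
      have hv : ∀ x ∈ Set.uIcc δ R, HasDerivAt v (v' x) x := by
        intro x _
        have h := (hasDerivAt_expf s A x).div_const (Complex.I * s * A)
        have heq : Complex.I * (s : ℂ) * (A : ℂ) *
            Complex.exp (Complex.I * Complex.ofReal (s * A * x)) / (Complex.I * s * A) =
            Complex.exp (Complex.I * Complex.ofReal (s * A * x)) :=
          mul_div_cancel_left₀ _ hisA
        rw [heq] at h
        exact h
      have hu'int : IntervalIntegrable u' volume δ R :=
        (continuousOn_const.mul (contOn_cpow _ hδpos hδR)).intervalIntegrable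
      have hv'int : IntervalIntegrable v' volume δ R :=
        ((Continuous.cexp (continuous_const.mul (Complex.continuous_ofReal.comp
          (continuous_const.mul continuous_id)))).continuousOn).intervalIntegrable
      have hIBP := intervalIntegral.integral_mul_deriv_eq_deriv_mul hu hv hu'int hv'int
      have hfeq : (∫ ρ in δ..R, f ρ) = ∫ x in δ..R, u x * v' x := by
        apply intervalIntegral.integral_congr
        intro x _
        simp only [hfdef, hu_def, hv'_def]
        ring
      rw [hfeq, hIBP, norm_mul, Complex.norm_real]
      have hnormv : ∀ x : ℝ, ‖v x‖ = A⁻¹ := by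
        intro x
        simp only [hv_def, norm_div]
        rw [norm_expI (s * A * x), norm_mul, norm_mul, Complex.norm_I,
          Complex.norm_real, Complex.norm_real, Real.norm_eq_abs, Real.norm_eq_abs, hs1,
          _root_.abs_of_pos hA0]
        simp
      have hAinv : (0 : ℝ) < A⁻¹ := inv_pos.mpr hA0
      have hboundary : ∀ x : ℝ, 0 < x → δ ≤ x → ‖u x * v x‖ ≤ 1 := by
        intro x hx0 hδx
        rw [norm_mul]
        simp only [hu_def]
        rw [norm_cpow_c hx0, hnormv]
        have h1 : 1 ≤ A * x := le_trans hAδ1 (by nlinarith)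
        have hxx : x * x⁻¹ = 1 := mul_inv_cancel₀ hx0.ne'
        have hAA : A * A⁻¹ = 1 := mul_inv_cancel₀ hA0.ne'
        nlinarith [mul_nonneg (sub_nonneg.mpr h1)
          (mul_nonneg (inv_pos.mpr hA0).le (inv_pos.mpr hx0).le)]
      have hintterm : ‖∫ x in δ..R, u' x * v x‖ ≤ 1 + |κ| := by
        have hgcont : ContinuousOn (fun x : ℝ => (1 + |κ|) * A⁻¹ * x ^ (-2 : ℝ))
            (Set.uIcc δ R) := by
          apply ContinuousOn.mul continuousOn_const
          intro x hx
          rw [Set.uIcc_of_le hδR] at hx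
          exact (Real.continuousAt_rpow_const x (-2)
            (Or.inl (lt_of_lt_of_le hδpos hx.1).ne')).continuousWithinAt
        have hgint : IntervalIntegrable (fun x : ℝ => (1 + |κ|) * A⁻¹ * x ^ (-2 : ℝ))
            volume δ R := hgcont.intervalIntegrable
        have hptwise : ∀ᵐ t ∂(volume.restrict (Set.uIoc δ R)),
            ‖u' t * v t‖ ≤ (1 + |κ|) * A⁻¹ * t ^ (-2 : ℝ) := by
          apply MeasureTheory.ae_restrict_of_forall_mem measurableSet_uIoc
          intro x hx
          rw [Set.uIoc_of_le hδR] at hx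
          have hx0 : 0 < x := lt_trans hδpos hx.1
          rw [norm_mul]
          simp only [hu'_def]
          rw [norm_mul, norm_cpow_d hx0, hnormv]
          have hcnorm : ‖(-1 : ℂ) + Complex.I * (κ : ℂ)‖ ≤ 1 + |κ| := by
            refine le_trans (norm_add_le _ _) ?_
            simp
          have hrp : (0:ℝ) ≤ x ^ (-2 : ℝ) := Real.rpow_nonneg hx0.le _
          calc ‖(-1 : ℂ) + Complex.I * (κ : ℂ)‖ * x ^ (-2 : ℝ) * A⁻¹
              ≤ (1 + |κ|) * x ^ (-2 : ℝ) * A⁻¹ := by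
                apply mul_le_mul_of_nonneg_right _ hAinv.le
                exact mul_le_mul_of_nonneg_right hcnorm hrp
            _ = (1 + |κ|) * A⁻¹ * x ^ (-2 : ℝ) := by ring
        refine le_trans (intervalIntegral.norm_integral_le_abs_of_norm_le hptwise hgint) ?_
        rw [intervalIntegral.integral_const_mul]
        have h0 : (0 : ℝ) ∉ Set.uIcc δ R := by
          rw [Set.uIcc_of_le hδR]
          intro h
          exact absurd h.1 (by linarith)
        rw [integral_rpow (Or.inr ⟨by norm_num, h0⟩)]
        rw [show ((-2 : ℝ) + 1) = (-1 : ℝ) by norm_num, Real.rpow_neg_one, Real.rpow_neg_one]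
        have hδinv : (0:ℝ) < δ⁻¹ := inv_pos.mpr hδpos
        have hRinv : (0:ℝ) < R⁻¹ := inv_pos.mpr hR
        have hinvle : R⁻¹ ≤ δ⁻¹ := by
          apply inv_anti₀ hδpos hδR
        have hdinv : δ⁻¹ ≤ A := by
          have hdd : δ * δ⁻¹ = 1 := mul_inv_cancel₀ hδpos.ne'
          nlinarith [mul_nonneg (sub_nonneg.mpr hAδ1) hδinv.le]
        have h1κ : (0:ℝ) ≤ 1 + |κ| := by positivity
        have habs : |(1 + |κ|) * A⁻¹ * ((R⁻¹ - δ⁻¹) / (-1))| =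
            (1 + |κ|) * A⁻¹ * (δ⁻¹ - R⁻¹) := by
          rw [_root_.abs_of_nonneg]
          · ring
          · have : (R⁻¹ - δ⁻¹) / (-1) = δ⁻¹ - R⁻¹ := by ring
            rw [this]
            exact mul_nonneg (mul_nonneg h1κ hAinv.le) (sub_nonneg.mpr hinvle)
        rw [habs]
        have hAA : A⁻¹ * A = 1 := inv_mul_cancel₀ hA0.ne'
        nlinarith [mul_nonneg (mul_nonneg h1κ hAinv.le) hRinv.le,
          mul_nonneg (mul_nonneg h1κ hAinv.le) (sub_nonneg.mpr hdinv)]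
      have hb1 : ‖u R * v R‖ ≤ 1 := hboundary R hR hδR
      have hb2 : ‖u δ * v δ‖ ≤ 1 := hboundary δ hδpos le_rfl
      calc |κ| * ‖u R * v R - u δ * v δ - ∫ x in δ..R, u' x * v x‖
          ≤ |κ| * (‖u R * v R‖ + ‖u δ * v δ‖ + ‖∫ x in δ..R, u' x * v x‖) := by
            apply mul_le_mul_of_nonneg_left _ hsq
            refine le_trans (norm_sub_le _ _) ?_
            gcongr
            exact norm_sub_le _ _
        _ ≤ |κ| * (1 + 1 + (1 + |κ|)) := by
            apply mul_le_mul_of_nonneg_left _ hsq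
            gcongr
        _ = |κ| * (3 + |κ|) := by ring
  -- combine
  calc ‖(κ : ℂ) * ∫ ρ in ε..R, f ρ‖
      = ‖(κ : ℂ) * (∫ ρ in ε..δ, f ρ) + (κ : ℂ) * ∫ ρ in δ..R, f ρ‖ := by
        rw [hsplit, mul_add]
    _ ≤ ‖(κ : ℂ) * ∫ ρ in ε..δ, f ρ‖ + ‖(κ : ℂ) * ∫ ρ in δ..R, f ρ‖ := norm_add_le _ _
    _ ≤ (2 + 2 * |κ|) + |κ| * (3 + |κ|) := add_le_add hnear hfar
    _ ≤ 10 * (1 + |κ|) ^ 2 := by nlinarith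
end

section
/- The family f_j := c e^{-ijφ(D)} g, j ∈ ℤ, is orthonormal in L²(ℝ^d) for an appropriate constant c > 0, where φ(ξ) = φ₀(|ξ|) with φ₀ increasing and C¹ away from 0, and ĝ(ξ) = 1_{[φ₀^{-1}(ℓπ), φ₀^{-1}((ℓ+2)π)]}(|ξ|) |ξ|^{-(d-1)/2} φ₀'(|ξ|)^{1/2} for a fixed integer ℓ. -/
open MeasureTheory Complex

private lemma aux_subst (φ₀ : ℝ → ℝ) (a b : ℝ) (ha : 0 < a) (hab : a < b) (ℓ : ℤ)
    (hφa : φ₀ a = ℓ * Real.pi) (hφb : φ₀ b = (ℓ + 2) * Real.pi)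
    (hφ₀C1 : ContDiffOn ℝ 1 φ₀ (Set.Ioi 0))
    (m : ℤ) :
    ∫ x in a..b, (deriv φ₀ x) • Complex.exp (Complex.I * m * φ₀ x)
      = if m = 0 then ((2 * Real.pi : ℝ) : ℂ) else 0 := by
  have hsub : Set.uIcc a b ⊆ Set.Ioi 0 := by
    rw [Set.uIcc_of_le hab.le]
    exact fun x hx => lt_of_lt_of_le ha hx.1
  have hderiv : ∀ x ∈ Set.uIcc a b, HasDerivAt φ₀ (deriv φ₀ x) x := by
    intro x hx
    have hx' : x ∈ Set.Ioi (0:ℝ) := hsub hx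
    have := (hφ₀C1.differentiableOn one_ne_zero).differentiableAt (isOpen_Ioi.mem_nhds hx')
    exact this.hasDerivAt
  have hcont : ContinuousOn (deriv φ₀) (Set.uIcc a b) :=
    (hφ₀C1.continuousOn_deriv_of_isOpen isOpen_Ioi le_rfl).mono hsub
  have hg : Continuous fun u : ℝ => Complex.exp (Complex.I * m * u) := by
    fun_prop
  have := intervalIntegral.integral_comp_smul_deriv hderiv hcont hg
  simp only [Function.comp] at this
  rw [this, hφa, hφb]
  by_cases hm : m = 0
  · simp [hm, intervalIntegral.integral_const]
    ring
  · have hc : Complex.I * m ≠ 0 := by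
      simp [Complex.I_ne_zero, hm]
    rw [if_neg hm]
    have := integral_exp_mul_complex (a := (ℓ:ℝ) * Real.pi) (b := ((ℓ:ℝ)+2) * Real.pi) hc
    rw [this]
    push_cast
    have h1 : Complex.I * m * (((ℓ:ℂ)+2) * Real.pi) = Complex.I * m * ((ℓ:ℂ) * Real.pi) + (m : ℂ) * (2 * Real.pi * Complex.I) := by ring
    rw [h1, Complex.exp_add, Complex.exp_int_mul_two_pi_mul_I]
    simp

private lemma aux_conj_mul (x y r : ℝ) (j k : ℤ) :
    (starRingEnd ℂ) ((x:ℂ) * Complex.exp (-(Complex.I) * (j:ℂ) * (r:ℂ)) * (y:ℂ)) *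
      ((x:ℂ) * Complex.exp (-(Complex.I) * (k:ℂ) * (r:ℂ)) * (y:ℂ))
    = (x:ℂ)^2 * Complex.exp (Complex.I * (((j:ℤ) - k : ℤ):ℂ) * (r:ℂ)) * (y:ℂ)^2 := by
  rw [map_mul, map_mul, ← Complex.exp_conj, Complex.conj_ofReal, Complex.conj_ofReal]
  have : (starRingEnd ℂ) (-(Complex.I) * (j:ℂ) * (r:ℂ)) = Complex.I * (j:ℂ) * (r:ℂ) := by
    simp [map_mul, Complex.conj_ofReal]
  rw [this]
  push_cast
  rw [show Complex.I * ((j:ℂ) - (k:ℂ)) * (r:ℂ) = (Complex.I * (j:ℂ) * (r:ℂ)) + (-(Complex.I) * (k:ℂ) * (r:ℂ)) by ring, Complex.exp_add]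
  ring

/-- The family `f_j = c e^{-ijφ(D)} g`, `j ∈ ℤ`, is orthonormal in `L²(ℝ^d)` for an
appropriate constant `c > 0`, where `φ(ξ) = φ₀(|ξ|)` with `φ₀` increasing and `C¹`
away from `0`, and
`ĝ(ξ) = 1_{[φ₀^{-1}(ℓπ), φ₀^{-1}((ℓ+2)π)]}(|ξ|) |ξ|^{-(d-1)/2} φ₀'(|ξ|)^{1/2}`.
The statement is written on the frequency side: `f̂_j(ξ) = c e^{-ijφ₀(|ξ|)} ĝ(ξ)`, and
orthonormality reads `∫ conj(f̂_j) f̂_k = δ_{jk}` (after normalizing Plancherel's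
constant into `c`). -/
theorem time_translated_family_orthonormal (d : ℕ) (hd : 1 ≤ d)
    (φ₀ : ℝ → ℝ) (a b : ℝ) (ha : 0 < a) (hab : a < b) (ℓ : ℤ)
    (hφa : φ₀ a = ℓ * Real.pi) (hφb : φ₀ b = (ℓ + 2) * Real.pi)
    (hφ₀C1 : ContDiffOn ℝ 1 φ₀ (Set.Ioi 0))
    (hφ₀mono : StrictMonoOn φ₀ (Set.Ioi 0))
    (hφ₀deriv : ∀ s ∈ Set.Ioi (0 : ℝ), 0 ≤ deriv φ₀ s) :
    ∃ c : ℝ, 0 < c ∧ ∀ j k : ℤ,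
      (∫ ξ : EuclideanSpace ℝ (Fin d),
        (starRingEnd ℂ)
            ((c : ℂ) * Complex.exp (-(Complex.I) * (j : ℂ) * Complex.ofReal (φ₀ ‖ξ‖)) *
              Complex.ofReal (Set.indicator (Set.Icc a b)
                (fun s => s ^ (-((d : ℝ) - 1) / 2) * Real.sqrt (deriv φ₀ s)) ‖ξ‖)) *
          ((c : ℂ) * Complex.exp (-(Complex.I) * (k : ℂ) * Complex.ofReal (φ₀ ‖ξ‖)) *
            Complex.ofReal (Set.indicator (Set.Icc a b)
              (fun s => s ^ (-((d : ℝ) - 1) / 2) * Real.sqrt (deriv φ₀ s)) ‖ξ‖)))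
        = if j = k then 1 else 0 := by
  classical
  haveI : Nontrivial (EuclideanSpace ℝ (Fin d)) := by
    apply Module.nontrivial_of_finrank_pos (R := ℝ)
    rw [finrank_euclideanSpace]
    simpa using (show 0 < d by omega)

  set h : ℝ → ℝ := fun s => s ^ (-((d : ℝ) - 1) / 2) * Real.sqrt (deriv φ₀ s) with hh
  set V : ℝ := (volume (Metric.ball (0 : EuclideanSpace ℝ (Fin d)) 1)).toReal with hV
  have hVpos : 0 < V := by
    rw [hV]
    refine ENNReal.toReal_pos (ne_of_gt (Metric.measure_ball_pos _ _ one_pos)) ?_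
    exact (measure_ball_lt_top).ne
  set K : ℝ := (d : ℝ) * V * (2 * Real.pi) with hK
  have hKpos : 0 < K := by
    apply mul_pos (mul_pos _ hVpos)
    · positivity
    · exact_mod_cast Nat.pos_of_ne_zero (by omega)
  refine ⟨Real.sqrt K⁻¹, Real.sqrt_pos.2 (inv_pos.2 hKpos), ?_⟩
  set c : ℝ := Real.sqrt K⁻¹ with hc
  have hc2 : c ^ 2 = K⁻¹ := Real.sq_sqrt (inv_nonneg.2 hKpos.le)
  intro j k
  set m : ℤ := j - k with hm
  -- rewrite integrand
  have hpt : ∀ ξ : EuclideanSpace ℝ (Fin d),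
      (starRingEnd ℂ)
            ((c : ℂ) * Complex.exp (-(Complex.I) * (j : ℂ) * Complex.ofReal (φ₀ ‖ξ‖)) *
              Complex.ofReal (Set.indicator (Set.Icc a b) h ‖ξ‖)) *
          ((c : ℂ) * Complex.exp (-(Complex.I) * (k : ℂ) * Complex.ofReal (φ₀ ‖ξ‖)) *
            Complex.ofReal (Set.indicator (Set.Icc a b) h ‖ξ‖))
      = (fun r : ℝ => (c:ℂ)^2 * Complex.exp (Complex.I * (m:ℂ) * (φ₀ r : ℝ)) *
          ((Set.indicator (Set.Icc a b) h r : ℝ) : ℂ)^2) ‖ξ‖ := by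
    intro ξ
    exact aux_conj_mul c (Set.indicator (Set.Icc a b) h ‖ξ‖) (φ₀ ‖ξ‖) j k
  rw [integral_congr_ae (Filter.Eventually.of_forall hpt)]
  rw [MeasureTheory.integral_fun_norm_addHaar volume
    (fun r : ℝ => (c:ℂ)^2 * Complex.exp (Complex.I * (m:ℂ) * (φ₀ r : ℝ)) *
          ((Set.indicator (Set.Icc a b) h r : ℝ) : ℂ)^2)]
  rw [finrank_euclideanSpace, Fintype.card_fin]
  have hIccIoi : Set.Icc a b ⊆ Set.Ioi (0:ℝ) := fun x hx => lt_of_lt_of_le ha hx.1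
  set G : ℝ → ℂ := fun y => (c:ℂ)^2 * ((deriv φ₀ y) • Complex.exp (Complex.I * (m:ℂ) * (φ₀ y : ℝ))) with hG
  have hEqOn : Set.EqOn
      (fun y : ℝ => y ^ (d-1) • ((c:ℂ)^2 * Complex.exp (Complex.I * (m:ℂ) * (φ₀ y : ℝ)) *
          ((Set.indicator (Set.Icc a b) h y : ℝ) : ℂ)^2))
      (Set.indicator (Set.Icc a b) G) (Set.Ioi 0) := by
    intro y hy
    by_cases hyab : y ∈ Set.Icc a b
    · have hyp : (0:ℝ) < y := hy
      have hD : 0 ≤ deriv φ₀ y := hφ₀deriv y hy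
      have hsq : (h y)^2 = y ^ (-((d:ℝ)-1)) * deriv φ₀ y := by
        rw [hh]
        simp only []
        rw [mul_pow, Real.sq_sqrt hD]
        congr 1
        rw [← Real.rpow_natCast (y ^ (-((d:ℝ)-1)/2)) 2, ← Real.rpow_mul hyp.le]
        norm_num
      have hpow : (y:ℝ)^(d-1) * y ^ (-((d:ℝ)-1)) = 1 := by
        rw [← Real.rpow_natCast y (d-1), ← Real.rpow_add hyp]
        have hcast : ((d-1:ℕ):ℝ) = (d:ℝ)-1 := by
          push_cast [Nat.cast_sub hd]
          ring
        rw [hcast]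
        simp
      simp only [Set.indicator_of_mem hyab, hG]
      have hkey : (y:ℝ)^(d-1) * (h y)^2 = deriv φ₀ y := by
        rw [hsq, ← mul_assoc, hpow, one_mul]
      calc (fun y : ℝ => y ^ (d-1) • ((c:ℂ)^2 * Complex.exp (Complex.I * (m:ℂ) * (φ₀ y : ℝ)) *
          ((h y : ℝ) : ℂ)^2)) y
          = (((y:ℝ)^(d-1) * (h y)^2 : ℝ) : ℂ) * ((c:ℂ)^2 * Complex.exp (Complex.I * (m:ℂ) * (φ₀ y : ℝ))) := by
            simp only [Complex.real_smul]
            push_cast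
            ring
        _ = (c:ℂ)^2 * ((deriv φ₀ y) • Complex.exp (Complex.I * (m:ℂ) * (φ₀ y : ℝ))) := by
            rw [hkey, Complex.real_smul]
            ring
    · simp [Set.indicator_of_notMem hyab]
  rw [MeasureTheory.setIntegral_congr_fun measurableSet_Ioi hEqOn,
    MeasureTheory.setIntegral_indicator measurableSet_Icc,
    Set.inter_eq_self_of_subset_right hIccIoi,
    MeasureTheory.integral_Icc_eq_integral_Ioc,
    ← intervalIntegral.integral_of_le hab.le]
  have : ∫ x in a..b, G x = (c:ℂ)^2 * ∫ x in a..b, (deriv φ₀ x) • Complex.exp (Complex.I * (m:ℂ) * (φ₀ x : ℝ)) := by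
    rw [hG, intervalIntegral.integral_const_mul]
  rw [this, aux_subst φ₀ a b ha hab ℓ hφa hφb hφ₀C1 m]
  by_cases hjk : j = k
  · have hm0 : m = 0 := by rw [hm, hjk, sub_self]
    rw [if_pos hm0, if_pos hjk]
    have hcK : ((c:ℝ)^2 : ℝ) = K⁻¹ := hc2
    have hreal : (d:ℝ) * (V * (c^2 * (2 * Real.pi))) = 1 := by
      rw [hc2, hK]
      field_simp
    calc (d:ℕ) • (V • ((c:ℂ)^2 * ((2 * Real.pi : ℝ) : ℂ)))
        = (((d:ℝ) * (V * (c^2 * (2 * Real.pi))) : ℝ) : ℂ) := by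
          rw [nsmul_eq_mul, Complex.real_smul]
          push_cast
          ring
      _ = 1 := by rw [hreal]; norm_num
  · have hm0 : m ≠ 0 := by rw [hm]; exact sub_ne_zero.2 hjk
    rw [if_neg hm0, if_neg hjk]
    simp
-- END
end
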